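/- For all natural numbers a, b and all i in {0,...,b} and j in {0,...,a+b-i}, the coefficient of x_1^j x_2^i x_3^j in the expansion of (x_1 x_3 + 1)^a (x_1 x_3 + x_2 + 1)^b equals C(b,i) C(a+b-i, j), and every monomial appearing in the expansion is of this form. -/
import Mathlib

open MvPolynomial Finset

lemma mono_form (i j : ℕ) (c : ℤ) :
    (MvPolynomial.C c * X 1 ^ i * (X 0 ^ j * X 2 ^ j) : MvPolynomial (Fin 3) ℤ) =
    monomial (Finsupp.single (0 : Fin 3) j + Finsupp.single 1 i + Finsupp.single 2 j) c := by
  simp only [MvPolynomial.C_apply, X_pow_eq_monomial, monomial_mul, mul_one, one_mul]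
  congr 1
  exact congrArg _ (by abel)

lemma key_eq (a b : ℕ) :
    ((X 0 * X 2 + 1) ^ a * (X 0 * X 2 + X 1 + 1) ^ b : MvPolynomial (Fin 3) ℤ) =
    ∑ i ∈ range (b+1), ∑ j ∈ range (a+b-i+1),
      monomial (Finsupp.single (0:Fin 3) j + Finsupp.single 1 i + Finsupp.single 2 j)
        ((b.choose i * (a+b-i).choose j : ℕ) : ℤ) := by
  have hb : ((X 0 * X 2 + X 1 + 1) : MvPolynomial (Fin 3) ℤ) = X 1 + (X 0 * X 2 + 1) := by ring
  rw [hb, add_pow (X 1 : MvPolynomial (Fin 3) ℤ) (X 0 * X 2 + 1) b, Finset.mul_sum]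
  refine Finset.sum_congr rfl fun i hi => ?_
  have hib : i ≤ b := Nat.lt_succ_iff.mp (Finset.mem_range.mp hi)
  have h1 : (X 0 * X 2 + 1 : MvPolynomial (Fin 3) ℤ) ^ a *
      (X 1 ^ i * (X 0 * X 2 + 1) ^ (b - i) * (b.choose i : MvPolynomial (Fin 3) ℤ))
      = (MvPolynomial.C (b.choose i : ℤ)) * X 1 ^ i * (X 0 * X 2 + 1) ^ (a + b - i) := by
    have h2 : a + b - i = a + (b - i) := by omega
    rw [h2, pow_add]
    simp only [map_natCast]
    ring
  rw [h1, add_pow (X 0 * X 2 : MvPolynomial (Fin 3) ℤ) 1 (a + b - i), Finset.mul_sum]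
  refine Finset.sum_congr rfl fun j hj => ?_
  rw [← mono_form]
  simp only [map_mul, map_natCast]
  rw [mul_pow]
  push_cast
  ring

lemma triple_inj {i j i' j' : ℕ}
    (h : (Finsupp.single (0:Fin 3) j + Finsupp.single 1 i + Finsupp.single 2 j)
       = Finsupp.single (0:Fin 3) j' + Finsupp.single 1 i' + Finsupp.single 2 j') :
    i = i' ∧ j = j' := by
  constructor
  · simpa [Finsupp.single_apply] using DFunLike.congr_fun h 1
  · simpa [Finsupp.single_apply] using DFunLike.congr_fun h 0

theorem inward_expansion_coeff (a b : ℕ) :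
    (∀ i j : ℕ, i ≤ b → j ≤ a + b - i →
      MvPolynomial.coeff
          (Finsupp.single (0 : Fin 3) j + Finsupp.single 1 i + Finsupp.single 2 j)
          ((X 0 * X 2 + 1) ^ a * (X 0 * X 2 + X 1 + 1) ^ b : MvPolynomial (Fin 3) ℤ)
        = (b.choose i * (a + b - i).choose j : ℤ)) ∧
    (∀ d : Fin 3 →₀ ℕ,
      MvPolynomial.coeff d
          ((X 0 * X 2 + 1) ^ a * (X 0 * X 2 + X 1 + 1) ^ b : MvPolynomial (Fin 3) ℤ) ≠ 0 →
      ∃ i j : ℕ, i ≤ b ∧ j ≤ a + b - i ∧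
        d = Finsupp.single (0 : Fin 3) j + Finsupp.single 1 i + Finsupp.single 2 j) := by
  constructor
  · intro i j hi hj
    rw [key_eq]
    rw [coeff_sum]
    rw [Finset.sum_eq_single_of_mem i (Finset.mem_range.mpr (Nat.lt_succ_of_le hi))]
    · rw [coeff_sum]
      rw [Finset.sum_eq_single_of_mem j (Finset.mem_range.mpr (Nat.lt_succ_of_le hj))]
      · rw [coeff_monomial, if_pos rfl]; push_cast; ring
      · intro j' _ hne
        rw [coeff_monomial, if_neg]
        intro h
        exact hne (triple_inj h).2
    · intro i' _ hne
      rw [coeff_sum]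
      refine Finset.sum_eq_zero fun j' _ => ?_
      rw [coeff_monomial, if_neg]
      intro h
      exact hne (triple_inj h).1
  · intro d hd
    rw [key_eq, coeff_sum] at hd
    by_contra hc
    push_neg at hc
    apply hd
    refine Finset.sum_eq_zero fun i hi => ?_
    rw [coeff_sum]
    refine Finset.sum_eq_zero fun j hj => ?_
    rw [coeff_monomial, if_neg]
    intro h
    exact hc i j (Nat.lt_succ_iff.mp (Finset.mem_range.mp hi))
      (Nat.lt_succ_iff.mp (Finset.mem_range.mp hj)) h.symm
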